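/- For n ≥ k > 0, the number of k-element subsets of Z/nZ whose sum of elements is 0 modulo n equals (1/n) · ∑_{d | gcd(n,k)} (−1)^{k−k/d} φ(d) · C(n/d, k/d), where φ is Euler's totient function and C denotes the binomial coefficient. -/

import Mathlib

/-- `T n k s` is the number of `k`-element subsets of `ℤ/nℤ` whose sum of elements
is `s` modulo `n`. -/
noncomputable def T (n k : ℕ) (s : ℤ) : ℕ :=
  Nat.card {Q : Finset (ZMod n) // Q.card = k ∧ (∑ a ∈ Q, a) = (s : ZMod n)}

open Polynomial Finset

namespace BarnesAux


set_option linter.unusedSectionVars false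
variable {n : ℕ} [NeZero n] {ζ : ℂ}

/-- The additive character `x ↦ ζ ^ x.val`. -/
noncomputable def psi (ζ : ℂ) (x : ZMod n) : ℂ := ζ ^ x.val

lemma psi_zero (ζ : ℂ) : psi (n := n) ζ 0 = 1 := by
  simp [psi]

lemma psi_natCast (hζ : ζ ^ n = 1) (m : ℕ) : psi (n := n) ζ (m : ZMod n) = ζ ^ m := by
  rw [psi, ZMod.val_natCast]
  conv_rhs => rw [← Nat.div_add_mod m n]
  rw [pow_add, pow_mul, hζ, one_pow, one_mul]

lemma psi_add (hζ : ζ ^ n = 1) (x y : ZMod n) :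
    psi ζ (x + y) = psi ζ x * psi ζ y := by
  have hx : ((x.val : ℕ) : ZMod n) = x := ZMod.natCast_rightInverse x
  have hy : ((y.val : ℕ) : ZMod n) = y := ZMod.natCast_rightInverse y
  have : x + y = ((x.val + y.val : ℕ) : ZMod n) := by push_cast [hx, hy]; ring
  rw [this, psi_natCast hζ, pow_add]
  rfl

lemma psi_sum (hζ : ζ ^ n = 1) {ι : Type*} (s : Finset ι) (f : ι → ZMod n) :
    psi ζ (∑ i ∈ s, f i) = ∏ i ∈ s, psi ζ (f i) := by
  classical
  induction s using Finset.cons_induction with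
  | empty => simp [psi_zero]
  | cons a s ha ih => rw [Finset.sum_cons, Finset.prod_cons, psi_add hζ, ih]

lemma psi_smul (hζ : ζ ^ n = 1) (m : ℕ) (x : ZMod n) :
    psi ζ (m • x) = psi ζ x ^ m := by
  induction m with
  | zero => simp [psi_zero]
  | succ m ih => rw [succ_nsmul, psi_add hζ, ih, pow_succ]

lemma psi_mul (hζ : ζ ^ n = 1) (x y : ZMod n) :
    psi ζ (x * y) = psi ζ y ^ x.val := by
  have : x * y = x.val • y := by
    rw [nsmul_eq_mul, ZMod.natCast_rightInverse x]
  rw [this, psi_smul hζ]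

lemma orderOf_psi (hζ : IsPrimitiveRoot ζ n) (x : ZMod n) :
    orderOf (psi ζ x) = addOrderOf x := by
  let f : Multiplicative (ZMod n) →* ℂ :=
    { toFun := fun y => psi ζ (Multiplicative.toAdd y)
      map_one' := psi_zero ζ
      map_mul' := fun a b => psi_add hζ.pow_eq_one _ _ }
  have hf : Function.Injective f := by
    intro a b hab
    have h1 : ζ ^ (Multiplicative.toAdd a).val = ζ ^ (Multiplicative.toAdd b).val := hab
    have h2 := hζ.pow_inj (ZMod.val_lt _) (ZMod.val_lt _) h1
    exact Multiplicative.toAdd.injective (ZMod.val_injective n h2)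
  have h := orderOf_injective f hf (Multiplicative.ofAdd x)
  rwa [orderOf_ofAdd_eq_addOrderOf] at h

lemma sum_val_reindex {M : Type*} [AddCommMonoid M] (g : ℕ → M) :
    ∑ j : ZMod n, g (ZMod.val j) = ∑ i ∈ Finset.range n, g i := by
  have himg : (Finset.univ : Finset (ZMod n)).image ZMod.val = Finset.range n := by
    ext i
    simp only [Finset.mem_image, Finset.mem_univ, true_and, Finset.mem_range]
    constructor
    · rintro ⟨a, rfl⟩; exact a.val_lt
    · intro hi; exact ⟨(i : ZMod n), ZMod.val_cast_of_lt hi⟩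
  rw [← himg, Finset.sum_image (fun x _ y _ h => ZMod.val_injective n h)]

lemma prod_val_reindex {M : Type*} [CommMonoid M] (g : ℕ → M) :
    ∏ j : ZMod n, g (ZMod.val j) = ∏ i ∈ Finset.range n, g i := by
  have himg : (Finset.univ : Finset (ZMod n)).image ZMod.val = Finset.range n := by
    ext i
    simp only [Finset.mem_image, Finset.mem_univ, true_and, Finset.mem_range]
    constructor
    · rintro ⟨a, rfl⟩; exact a.val_lt
    · intro hi; exact ⟨(i : ZMod n), ZMod.val_cast_of_lt hi⟩
  rw [← himg, Finset.prod_image (fun x _ y _ h => ZMod.val_injective n h)]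

/-- Orthogonality of characters. -/
lemma sum_psi (hζ : IsPrimitiveRoot ζ n) (s : ZMod n) :
    ∑ j : ZMod n, psi ζ (j * s) = if s = 0 then (n : ℂ) else 0 := by
  split_ifs with h
  · subst h
    simp [psi_zero, ZMod.card]
  · have hw1 : psi ζ s ≠ 1 := by
      intro hc
      have h1 := orderOf_psi hζ s
      rw [hc, orderOf_one] at h1
      exact h (AddMonoid.addOrderOf_eq_one_iff.mp h1.symm)
    have hwn : psi ζ s ^ n = 1 := by
      rw [psi]
      rw [← pow_mul, mul_comm, pow_mul, hζ.pow_eq_one, one_pow]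
    calc ∑ j : ZMod n, psi ζ (j * s) = ∑ j : ZMod n, psi ζ s ^ (ZMod.val j) := by
          refine Finset.sum_congr rfl fun j _ => psi_mul hζ.pow_eq_one j s
      _ = ∑ i ∈ Finset.range n, psi ζ s ^ i := sum_val_reindex _
      _ = (psi ζ s ^ n - 1) / (psi ζ s - 1) := geom_sum_eq hw1 n
      _ = 0 := by rw [hwn]; simp


section Poly


/-- Coefficient of `(X^e - C c)^m`. -/
lemma coeff_X_pow_sub_C_pow (e m t : ℕ) (c : ℂ) (he : 0 < e) (ht : t ≤ e * m) :
    ((X ^ e - C c) ^ m).coeff t =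
      if e ∣ t then ((m.choose (t / e) : ℂ) * (-c) ^ (m - t / e)) else 0 := by
  have hrw : (X ^ e - C c) ^ m
      = ∑ i ∈ Finset.range (m + 1),
          C ((-c) ^ (m - i) * (m.choose i : ℂ)) * X ^ (e * i) := by
    rw [sub_eq_add_neg, ← C_neg, add_pow]
    refine Finset.sum_congr rfl fun i _ => ?_
    rw [← pow_mul, ← C_pow, ← C_eq_natCast]
    rw [mul_assoc, ← C_mul, mul_comm]
  rw [hrw, finset_sum_coeff]
  simp_rw [coeff_C_mul_X_pow]
  by_cases hdvd : e ∣ t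
  · rw [if_pos hdvd]
    have htm : t / e ≤ m := by
      have := Nat.div_le_div_right (c := e) ht
      rwa [Nat.mul_div_cancel_left m he] at this
    rw [Finset.sum_eq_single (t / e)]
    · rw [if_pos (Nat.mul_div_cancel' hdvd).symm]
      ring
    · intro i hi hne
      rw [if_neg]
      intro hcontra
      apply hne
      have : e * i / e = t / e := by rw [← hcontra]
      rwa [Nat.mul_div_cancel_left i he] at this
    · intro hnot
      exact absurd (Finset.mem_range.mpr (Nat.lt_succ_of_le htm)) hnot
  · rw [if_neg hdvd]
    refine Finset.sum_eq_zero fun i _ => ?_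
    rw [if_neg]
    intro hcontra
    exact hdvd ⟨i, hcontra⟩

/-- `∏ (X + w^i) = X^e - (-1)^e` for a primitive `e`-th root of unity. -/
lemma prod_range_X_add {w : ℂ} {e : ℕ} (he : 0 < e) (hw : IsPrimitiveRoot w e) :
    ∏ i ∈ Finset.range e, (X + C (w ^ i)) = X ^ e - C ((-1 : ℂ) ^ e) := by
  haveI : NeZero e := ⟨he.ne'⟩
  have himg : Polynomial.nthRootsFinset e (1 : ℂ) = (Finset.range e).image (w ^ ·) := by
    ext x
    simp only [Polynomial.mem_nthRootsFinset he, Finset.mem_image, Finset.mem_range]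
    constructor
    · intro hx
      obtain ⟨i, hi, rfl⟩ := hw.eq_pow_of_pow_eq_one hx
      exact ⟨i, hi, rfl⟩
    · rintro ⟨i, _, rfl⟩
      rw [← pow_mul, mul_comm, pow_mul, hw.pow_eq_one, one_pow]
  have h1 : ∀ x : ℂ, ∏ i ∈ Finset.range e, (x - w ^ i) = x ^ e - 1 := by
    intro x
    have h := congrArg (Polynomial.eval x) (X_pow_sub_one_eq_prod he hw)
    simp only [eval_sub, eval_pow, eval_X, eval_one, eval_prod, eval_C] at h
    rw [h, himg, Finset.prod_image]
    intro a ha b hb hab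
    exact hw.pow_inj (Finset.mem_range.mp ha) (Finset.mem_range.mp hb) hab
  refine Polynomial.funext fun x => ?_
  rw [eval_prod]
  simp only [eval_add, eval_X, eval_C, eval_sub, eval_pow]
  have key : ∀ i : ℕ, x + w ^ i = (-1) * ((-x) - w ^ i) := fun i => by ring
  calc ∏ i ∈ Finset.range e, (x + w ^ i)
      = ∏ i ∈ Finset.range e, (-1 : ℂ) * ((-x) - w ^ i) := by
        exact Finset.prod_congr rfl fun i _ => key i
    _ = (-1 : ℂ) ^ e * ∏ i ∈ Finset.range e, ((-x) - w ^ i) := by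
        rw [Finset.prod_mul_distrib, Finset.prod_const, Finset.card_range]
    _ = (-1 : ℂ) ^ e * ((-x) ^ e - 1) := by rw [h1 (-x)]
    _ = x ^ e - (-1 : ℂ) ^ e := by
        have hh : ((-1 : ℂ) ^ e) * ((-1 : ℂ) ^ e) = 1 := by
          rw [← mul_pow]; norm_num
        rw [neg_pow]
        linear_combination (x ^ e) * hh

/-- Periodic collapse of a product over `range (e * m)`. -/
lemma prod_range_mul_of_periodic {M : Type*} [CommMonoid M] (f : ℕ → M) (e m : ℕ)
    (hf : ∀ i, f (i + e) = f i) :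
    ∏ i ∈ Finset.range (e * m), f i = (∏ i ∈ Finset.range e, f i) ^ m := by
  have hshift : ∀ t i, f (i + e * t) = f i := by
    intro t
    induction t with
    | zero => simp
    | succ t ih =>
      intro i
      have : i + e * (t + 1) = (i + e * t) + e := by ring
      rw [this, hf, ih]
  induction m with
  | zero => simp
  | succ m ih =>
    rw [Nat.mul_succ, Finset.prod_range_add, ih, pow_succ]
    congr 1
    refine Finset.prod_congr rfl fun i _ => ?_
    rw [add_comm, hshift]

end Poly

lemma key (hζ : IsPrimitiveRoot ζ n) (k : ℕ) (hk : 0 < k) (hkn : k ≤ n) (j : ZMod n) :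
    ∑ Q ∈ Finset.powersetCard k (Finset.univ : Finset (ZMod n)), psi ζ (j * ∑ a ∈ Q, a) =
      if addOrderOf j ∣ k then
        (-1 : ℂ) ^ (k - k / addOrderOf j) *
          ((n / addOrderOf j).choose (k / addOrderOf j) : ℂ)
      else 0 := by
  have hn : 0 < n := Nat.pos_of_ne_zero (NeZero.ne n)
  set e := addOrderOf j with hedef
  set w := psi (n := n) ζ j with hwdef
  have hepos : 0 < e := addOrderOf_pos j
  have hedvd : e ∣ n := by
    have := addOrderOf_dvd_card (x := j)
    rwa [ZMod.card] at this
  have hworder : orderOf w = e := orderOf_psi hζ j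
  have hw : IsPrimitiveRoot w e := hworder ▸ IsPrimitiveRoot.orderOf w
  have hwe : w ^ e = 1 := by rw [← hworder]; exact pow_orderOf_eq_one w
  obtain ⟨m, hm⟩ := hedvd
  -- Step A : the sum is a coefficient
  have hA : ∑ Q ∈ Finset.powersetCard k (Finset.univ : Finset (ZMod n)),
        psi ζ (j * ∑ a ∈ Q, a)
      = (∏ a : ZMod n, (X + C (psi ζ (j * a)))).coeff (n - k) := by
    rw [Finset.prod_X_add_C_coeff _ _ (by rw [Finset.card_univ, ZMod.card]; omega)]
    rw [Finset.card_univ, ZMod.card, Nat.sub_sub_self hkn]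
    refine Finset.sum_congr rfl fun Q _ => ?_
    rw [Finset.mul_sum, psi_sum hζ.pow_eq_one]
  -- Step B : reindex the product
  have hB : (∏ a : ZMod n, (X + C (psi ζ (j * a))))
      = ∏ i ∈ Finset.range n, (X + C (w ^ i)) := by
    have h1 : ∀ a : ZMod n, psi ζ (j * a) = w ^ a.val := by
      intro a; rw [mul_comm, psi_mul hζ.pow_eq_one]
    simp_rw [h1]
    exact prod_val_reindex (fun i => X + C (w ^ i))
  -- Step C : periodic collapse and factorization
  have hC : ∏ i ∈ Finset.range n, (X + C (w ^ i))
      = (X ^ e - C ((-1 : ℂ) ^ e)) ^ m := by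
    rw [hm, prod_range_mul_of_periodic _ e m (fun i => by rw [pow_add, hwe, mul_one]),
      prod_range_X_add hepos hw]
  rw [hA, hB, hC, coeff_X_pow_sub_C_pow e m (n - k) _ hepos (by omega)]
  -- Step D : arithmetic
  have hiff : e ∣ (n - k) ↔ e ∣ k := by
    constructor
    · intro h
      have := Nat.dvd_sub ⟨m, hm⟩ h
      rwa [Nat.sub_sub_self hkn] at this
    · intro h
      exact Nat.dvd_sub ⟨m, hm⟩ h
  rw [if_congr hiff rfl rfl]
  split_ifs with h
  · obtain ⟨v, hv⟩ := h
    have hvm : v ≤ m := Nat.le_of_mul_le_mul_left (by omega : e * v ≤ e * m) hepos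
    have hnk : n - k = e * (m - v) := by rw [hm, hv, Nat.mul_sub]
    have hdiv1 : (n - k) / e = m - v := by rw [hnk, Nat.mul_div_cancel_left _ hepos]
    have hdiv2 : k / e = v := by rw [hv, Nat.mul_div_cancel_left _ hepos]
    have hdiv3 : n / e = m := by rw [hm, Nat.mul_div_cancel_left _ hepos]
    rw [hdiv1, hdiv2, hdiv3, Nat.sub_sub_self hvm, Nat.choose_symm hvm]
    have hvk : v ≤ k := by
      calc v ≤ e * v := Nat.le_mul_of_pos_left v hepos
        _ = k := hv.symm
    have hsign : (-(-1 : ℂ) ^ e) ^ v = (-1 : ℂ) ^ (k - v) := by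
      have h1 : (-(-1 : ℂ) ^ e) = (-1 : ℂ) ^ (e + 1) := by rw [pow_succ]; ring
      have h3 : (e + 1) * v = k + v := by rw [add_mul, one_mul, ← hv]
      have h2 : (e + 1) * v = (k - v) + 2 * v := by omega
      rw [h1, ← pow_mul, h2, pow_add, pow_mul]
      norm_num
    rw [hsign]
    ring
  · rfl

end BarnesAux

open BarnesAux Finset

/-- Barnes's formula:
`T(n,k,0) = (1/n) ∑_{d ∣ gcd(n,k)} (−1)^{k−k/d} φ(d) C(n/d, k/d)`. -/
theorem stmt_5 (n k : ℕ) (hk : 0 < k) (hkn : k ≤ n) :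
    (T n k 0 : ℤ) * n =
      ∑ d ∈ (Nat.gcd n k).divisors,
        (-1) ^ (k - k / d) * (Nat.totient d : ℤ) * (Nat.choose (n / d) (k / d) : ℤ) := by
  have hn : 0 < n := hk.trans_le hkn
  haveI : NeZero n := ⟨hn.ne'⟩
  classical
  obtain ⟨ζ, hζ⟩ : ∃ ζ : ℂ, IsPrimitiveRoot ζ n := ⟨_, Complex.isPrimitiveRoot_exp n hn.ne'⟩
  -- T as a Finset card
  have hTnat : T n k 0 = #(Finset.univ.filter
      fun Q : Finset (ZMod n) => Q.card = k ∧ ∑ a ∈ Q, a = 0) := by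
    rw [T, Nat.card_eq_fintype_card]
    simp only [Int.cast_zero]
    exact Fintype.card_subtype _
  -- double counting
  have hmain : ∑ j : ZMod n, ∑ Q ∈ Finset.powersetCard k (Finset.univ : Finset (ZMod n)),
        psi ζ (j * ∑ a ∈ Q, a) = (n : ℂ) * (T n k 0 : ℂ) := by
    rw [Finset.sum_comm]
    have h1 : ∀ Q ∈ Finset.powersetCard k (Finset.univ : Finset (ZMod n)),
        ∑ j : ZMod n, psi ζ (j * ∑ a ∈ Q, a)
          = if (∑ a ∈ Q, a) = 0 then (n : ℂ) else 0 := fun Q _ => sum_psi hζ _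
    rw [Finset.sum_congr rfl h1, ← Finset.sum_filter, Finset.sum_const, nsmul_eq_mul]
    have hcard : (Finset.powersetCard k (Finset.univ : Finset (ZMod n))).filter
          (fun Q => ∑ a ∈ Q, a = 0)
        = Finset.univ.filter (fun Q : Finset (ZMod n) => Q.card = k ∧ ∑ a ∈ Q, a = 0) := by
      ext Q
      simp only [Finset.mem_filter, Finset.mem_powersetCard_univ, Finset.mem_univ, true_and]
    rw [hcard, ← hTnat, mul_comm]
  -- group by additive order
  have hgroup : ∑ j : ZMod n, ∑ Q ∈ Finset.powersetCard k (Finset.univ : Finset (ZMod n)),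
        psi ζ (j * ∑ a ∈ Q, a)
      = ∑ e ∈ n.divisors, (Nat.totient e : ℂ) *
          (if e ∣ k then (-1 : ℂ) ^ (k - k / e) * ((n / e).choose (k / e) : ℂ) else 0) := by
    rw [Finset.sum_congr rfl (fun j _ => key hζ k hk hkn j)]
    have hmap : ∀ j : ZMod n, j ∈ (Finset.univ : Finset (ZMod n)) → addOrderOf j ∈ n.divisors := by
      intro j _
      refine Nat.mem_divisors.mpr ⟨?_, hn.ne'⟩
      have h := addOrderOf_dvd_card (x := j)
      rwa [ZMod.card] at h
    set f : ℕ → ℂ :=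
      fun e => if e ∣ k then (-1 : ℂ) ^ (k - k / e) * ((n / e).choose (k / e) : ℂ) else 0 with hf
    calc ∑ j : ZMod n,
          (if addOrderOf j ∣ k then
            (-1 : ℂ) ^ (k - k / addOrderOf j) *
              ((n / addOrderOf j).choose (k / addOrderOf j) : ℂ)
          else 0)
        = ∑ j : ZMod n, f (addOrderOf j) := rfl
      _ = ∑ e ∈ n.divisors, ∑ j ∈ Finset.univ.filter (fun j : ZMod n => addOrderOf j = e), f e :=
          (Finset.sum_fiberwise_of_maps_to' hmap f).symm
      _ = ∑ e ∈ n.divisors, (Nat.totient e : ℂ) * f e := by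
          refine Finset.sum_congr rfl fun e he => ?_
          rw [Finset.sum_const, nsmul_eq_mul]
          congr 1
          have hcard := IsAddCyclic.card_addOrderOf_eq_totient (α := ZMod n) (d := e)
            (by rw [ZMod.card]; exact (Nat.mem_divisors.mp he).1)
          rw [← hcard]
  -- divisors of the gcd
  have hdiv : ∑ e ∈ n.divisors, (Nat.totient e : ℂ) *
        (if e ∣ k then (-1 : ℂ) ^ (k - k / e) * ((n / e).choose (k / e) : ℂ) else 0)
      = ∑ e ∈ (Nat.gcd n k).divisors,
          (Nat.totient e : ℂ) * ((-1 : ℂ) ^ (k - k / e) * ((n / e).choose (k / e) : ℂ)) := by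
    simp_rw [mul_ite, mul_zero]
    rw [← Finset.sum_filter]
    congr 1
    have hg : Nat.gcd n k ≠ 0 := Nat.gcd_ne_zero_left hn.ne'
    ext e
    simp only [Finset.mem_filter, Nat.mem_divisors, Nat.dvd_gcd_iff, hn.ne', hg,
      ne_eq, not_false_eq_true, and_true]
    try tauto
  have hfinal : (n : ℂ) * (T n k 0 : ℂ)
      = ∑ e ∈ (Nat.gcd n k).divisors,
          (Nat.totient e : ℂ) * ((-1 : ℂ) ^ (k - k / e) * ((n / e).choose (k / e) : ℂ)) := by
    rw [← hmain, hgroup, hdiv]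
  have hcast : ((T n k 0 : ℤ) * (n : ℤ) : ℂ)
      = ((∑ d ∈ (Nat.gcd n k).divisors,
          (-1) ^ (k - k / d) * (Nat.totient d : ℤ) * (Nat.choose (n / d) (k / d) : ℤ) : ℤ) : ℂ) := by
    push_cast
    rw [mul_comm, hfinal]
    exact Finset.sum_congr rfl fun e _ => by ring
  exact_mod_cast hcast
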